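/- For every real ε ≠ −1, with R_ε := (1/(1+ε))·(id − ε·S), the following identity holds for every real inner product space and every family of vectors (V_w): ‖(id−E)∘id‖² = ‖(id−E)∘R_ε‖² + (2ε/(1+ε)²)·( ‖(id−E)∘id‖² + ⟨(id−E)∘id, (id−E)∘S⟩ ), where the inner product is taken over the words of length n. -/

import Mathlib

open Finsupp

/-- Words over the alphabet `A = {0,1,…,d}`. -/
abbrev Word (d : ℕ) : Type := List (Fin (d+1))

/-- The free real vector space with basis the set of all words. -/
abbrev KA (d : ℕ) : Type := Word d →₀ ℝ

/-- Shuffle product of two words, as an element of `KA d`. -/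
noncomputable def shuffleWord (d : ℕ) : Word d → Word d → KA d
  | [], v => Finsupp.single v 1
  | a :: u, [] => Finsupp.single (a :: u) 1
  | a :: u, b :: v =>
      Finsupp.mapDomain (List.cons a) (shuffleWord d u (b :: v)) +
      Finsupp.mapDomain (List.cons b) (shuffleWord d (a :: u) v)
  termination_by u v => u.length + v.length

/-- Bilinear extension of the shuffle product to `KA d`. -/
noncomputable def sh (d : ℕ) (x y : KA d) : KA d :=
  x.sum fun u cu => y.sum fun v cv => (cu * cv) • shuffleWord d u v

/-- Admissible words: concatenations of blocks each of which is the single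
letter `0` or a pair `aa` with `a ≠ 0`. -/
inductive Admissible (d : ℕ) : Word d → Prop
  | nil : Admissible d []
  | zero {w : Word d} : Admissible d w → Admissible d (0 :: w)
  | pair {w : Word d} (a : Fin (d+1)) : a ≠ 0 → Admissible d w →
      Admissible d (a :: a :: w)

/-- Number of `0` letters. -/
def zc (d : ℕ) (w : Word d) : ℕ := w.count 0

/-- Half the number of nonzero letters. -/
def dc (d : ℕ) (w : Word d) : ℕ := (w.length - w.count 0) / 2

def nc (d : ℕ) (w : Word d) : ℕ := zc d w + dc d w

open Classical in
/-- The expectation map on words. -/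
noncomputable def Ebar (d : ℕ) (t : ℝ) (w : Word d) : ℝ :=
  if Admissible d w then t ^ nc d w / (2 ^ dc d w * Nat.factorial (nc d w)) else 0

/-- Linear extension of the expectation map to `KA d`. -/
noncomputable def EbarL (d : ℕ) (t : ℝ) (x : KA d) : ℝ :=
  x.sum fun w c => c * Ebar d t w

/-- The linear endomorphism of `KA d` determined by values on basis words. -/
noncomputable def wordLift (d : ℕ) (f : Word d → KA d) : KA d →ₗ[ℝ] KA d :=
  Finsupp.lsum ℝ fun w => LinearMap.toSpanSingleton ℝ (KA d) (f w)

/-- The identity endomorphism `id`. -/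
noncomputable def idE (d : ℕ) : KA d →ₗ[ℝ] KA d := LinearMap.id

/-- The reversal endomorphism `|S|`. -/
noncomputable def revE (d : ℕ) : KA d →ₗ[ℝ] KA d :=
  wordLift d fun w => Finsupp.single w.reverse 1

/-- The antipode `S`. -/
noncomputable def Sa (d : ℕ) : KA d →ₗ[ℝ] KA d :=
  wordLift d fun w => Finsupp.single w.reverse ((-1 : ℝ) ^ w.length)

/-- The convolution unit `ν`. -/
noncomputable def nuE (d : ℕ) : KA d →ₗ[ℝ] KA d :=
  wordLift d fun w => if w = [] then Finsupp.single ([] : Word d) 1 else 0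

/-- The expectation endomorphism `E`. -/
noncomputable def EE (d : ℕ) (t : ℝ) : KA d →ₗ[ℝ] KA d :=
  wordLift d fun w => Finsupp.single ([] : Word d) (Ebar d t w)

/-- The convolution product `X ⋆ Y`. -/
noncomputable def conv (d : ℕ) (X Y : KA d →ₗ[ℝ] KA d) : KA d →ₗ[ℝ] KA d :=
  wordLift d fun w => ∑ k ∈ Finset.range (w.length + 1),
    sh d (X (Finsupp.single (w.take k) 1)) (Y (Finsupp.single (w.drop k) 1))

/-- Convolution powers, `X^{⋆0} = ν`. -/
noncomputable def convPow (d : ℕ) (X : KA d →ₗ[ℝ] KA d) : ℕ → (KA d →ₗ[ℝ] KA d)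
  | 0 => nuE d
  | k + 1 => conv d X (convPow d X k)

/-- The inner product `⟨X,Y⟩` of endomorphisms, taken over the words of
length `n`, relative to the family of vectors `Vf`. -/
noncomputable def ip (d : ℕ) (t : ℝ) {H : Type*} [NormedAddCommGroup H]
    [InnerProductSpace ℝ H] (Vf : Word d → H) (n : ℕ)
    (X Y : KA d →ₗ[ℝ] KA d) : ℝ :=
  ∑ u : Fin n → Fin (d+1), ∑ v : Fin n → Fin (d+1),
    EbarL d t (sh d (X (Finsupp.single (List.ofFn u) 1))
                    (Y (Finsupp.single (List.ofFn v) 1))) *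
      (inner ℝ (Vf (List.ofFn u)) (Vf (List.ofFn v)) : ℝ)

/-- Positive semidefiniteness of the expectation Gram matrix at grade `n`:
indexed by the words of length `n` together with the empty word. -/
def gramPSD (d n : ℕ) (t : ℝ) : Prop :=
  ∀ c : Option (Fin n → Fin (d+1)) → ℝ,
    0 ≤ ∑ x : Option (Fin n → Fin (d+1)), ∑ y : Option (Fin n → Fin (d+1)),
      c x * c y *
        EbarL d t (shuffleWord d (x.elim ([] : Word d) List.ofFn)
                                 (y.elim ([] : Word d) List.ofFn))

/-- `R_ε = (1/(1+ε))·(id − ε·S)`. -/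
noncomputable def Reps (d : ℕ) (ε : ℝ) : KA d →ₗ[ℝ] KA d :=
  (1 / (1 + ε)) • (idE d - ε • Sa d)

lemma shuffleWord_nil_left (d : ℕ) (w : Word d) : shuffleWord d [] w = Finsupp.single w 1 := by
  rw [shuffleWord]

lemma shuffleWord_nil_right (d : ℕ) (w : Word d) : shuffleWord d w [] = Finsupp.single w 1 := by
  cases w <;> rw [shuffleWord]

lemma shuffleWord_comm (d : ℕ) : ∀ (u v : Word d), shuffleWord d u v = shuffleWord d v u
  | [], v => by rw [shuffleWord_nil_left, shuffleWord_nil_right]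
  | a :: u, [] => by rw [shuffleWord_nil_left, shuffleWord_nil_right]
  | a :: u, b :: v => by
      rw [shuffleWord, shuffleWord, shuffleWord_comm d u (b :: v),
        shuffleWord_comm d (a :: u) v, add_comm]
  termination_by u v => u.length + v.length

lemma mapD_swap (d : ℕ) (a c : Fin (d+1)) (x : KA d) :
    Finsupp.mapDomain (· ++ [a]) (Finsupp.mapDomain (List.cons c) x) =
    Finsupp.mapDomain (List.cons c) (Finsupp.mapDomain (· ++ [a]) x) := by
  rw [← Finsupp.mapDomain_comp, ← Finsupp.mapDomain_comp]
  congr 1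
lemma shuffleWord_snoc (d : ℕ) : ∀ (u v : Word d) (a b : Fin (d+1)),
    shuffleWord d (u ++ [a]) (v ++ [b]) =
      Finsupp.mapDomain (· ++ [a]) (shuffleWord d u (v ++ [b])) +
      Finsupp.mapDomain (· ++ [b]) (shuffleWord d (u ++ [a]) v)
  | [], [], a, b => by
      simp only [List.nil_append, shuffleWord, shuffleWord_nil_left, shuffleWord_nil_right,
        Finsupp.mapDomain_single, List.singleton_append]
      rw [add_comm]
  | [], c :: v, a, b => by
      have IH := shuffleWord_snoc d [] v a b
      simp only [List.nil_append, List.cons_append] at IH ⊢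
      simp only [shuffleWord]
      rw [IH]
      simp only [shuffleWord_nil_left, shuffleWord_nil_right, Finsupp.mapDomain_add,
        Finsupp.mapDomain_single, List.cons_append, List.singleton_append,
        List.append_assoc, mapD_swap]
      abel
  | a' :: u, [], a, b => by
      have IH := shuffleWord_snoc d u [] a b
      simp only [List.nil_append, List.cons_append] at IH ⊢
      simp only [shuffleWord]
      rw [IH]
      simp only [shuffleWord_nil_left, shuffleWord_nil_right, Finsupp.mapDomain_add,
        Finsupp.mapDomain_single, List.cons_append, List.singleton_append,
        List.append_assoc, mapD_swap]
      abel
  | a' :: u, c :: v, a, b => by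
      have IH1 := shuffleWord_snoc d u (c :: v) a b
      have IH2 := shuffleWord_snoc d (a' :: u) v a b
      simp only [List.nil_append, List.cons_append] at IH1 IH2 ⊢
      rw [shuffleWord, IH1, IH2]
      conv_rhs => rw [shuffleWord, shuffleWord]
      simp only [Finsupp.mapDomain_add, mapD_swap]
      abel
  termination_by u v a b => u.length + v.length
lemma shuffleWord_reverse (d : ℕ) : ∀ (u v : Word d),
    shuffleWord d u.reverse v.reverse = Finsupp.mapDomain List.reverse (shuffleWord d u v)
  | [], v => by
      rw [List.reverse_nil, shuffleWord_nil_left, shuffleWord_nil_left,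
        Finsupp.mapDomain_single]
  | a :: u, [] => by
      rw [List.reverse_nil, shuffleWord_nil_right, shuffleWord_nil_right,
        Finsupp.mapDomain_single]
  | a :: u, b :: v => by
      rw [List.reverse_cons, List.reverse_cons, shuffleWord_snoc,
        ← (List.reverse_cons : (b :: v).reverse = v.reverse ++ [b]),
        ← (List.reverse_cons : (a :: u).reverse = u.reverse ++ [a]),
        shuffleWord_reverse d u (b :: v), shuffleWord_reverse d (a :: u) v, shuffleWord]
      simp only [Finsupp.mapDomain_add, ← Finsupp.mapDomain_comp]
      congr 2 <;> (funext w; simp)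
  termination_by u v => u.length + v.length

lemma admissible_append_zero (d : ℕ) {w : Word d} (h : Admissible d w) :
    Admissible d (w ++ [0]) := by
  induction h with
  | nil => exact Admissible.zero Admissible.nil
  | zero _ ih => exact Admissible.zero ih
  | pair a ha _ ih => exact Admissible.pair a ha ih

lemma admissible_append_pair (d : ℕ) {w : Word d} (a : Fin (d+1)) (ha : a ≠ 0)
    (h : Admissible d w) : Admissible d (w ++ [a, a]) := by
  induction h with
  | nil => exact Admissible.pair a ha Admissible.nil
  | zero _ ih => exact Admissible.zero ih
  | pair b hb _ ih => exact Admissible.pair b hb ih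

lemma admissible_reverse (d : ℕ) {w : Word d} (h : Admissible d w) :
    Admissible d w.reverse := by
  induction h with
  | nil => exact Admissible.nil
  | zero _ ih => simpa using admissible_append_zero d ih
  | pair a ha _ ih => simpa using admissible_append_pair d a ha ih

lemma admissible_reverse_iff (d : ℕ) (w : Word d) :
    Admissible d w.reverse ↔ Admissible d w := by
  constructor
  · intro h; simpa using admissible_reverse d h
  · exact admissible_reverse d

lemma Ebar_reverse (d : ℕ) (t : ℝ) (w : Word d) : Ebar d t w.reverse = Ebar d t w := by
  unfold Ebar nc zc dc
  rw [admissible_reverse_iff, List.count_reverse, List.length_reverse]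

lemma Ebar_nil (d : ℕ) (t : ℝ) : Ebar d t [] = 1 := by
  simp [Ebar, Admissible.nil, nc, zc, dc]
lemma sh_single_single (d : ℕ) (u v : Word d) (c c' : ℝ) :
    sh d (Finsupp.single u c) (Finsupp.single v c') = (c * c') • shuffleWord d u v := by
  unfold sh
  rw [Finsupp.sum_single_index, Finsupp.sum_single_index]
  · simp
  · simp [Finsupp.sum_single_index]

lemma sh_add_left (d : ℕ) (x y z : KA d) : sh d (x + y) z = sh d x z + sh d y z := by
  unfold sh
  rw [Finsupp.sum_add_index]
  · intro u _; simp
  · intro u _ c c'; simp [add_mul, add_smul, Finsupp.sum_add]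

lemma sh_add_right (d : ℕ) (x y z : KA d) : sh d x (y + z) = sh d x y + sh d x z := by
  unfold sh
  rw [← Finsupp.sum_add]
  congr 1; funext u cu
  rw [Finsupp.sum_add_index]
  · intro v _; simp
  · intro v _ c c'; simp [mul_add, add_smul]

lemma sh_smul_left (d : ℕ) (c : ℝ) (x z : KA d) : sh d (c • x) z = c • sh d x z := by
  unfold sh
  rw [Finsupp.sum_smul_index (by intro i; simp), Finsupp.smul_sum]
  congr 1; funext u cu
  rw [Finsupp.smul_sum]
  congr 1; funext v cv
  rw [smul_smul, mul_assoc]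

lemma sh_smul_right (d : ℕ) (c : ℝ) (x z : KA d) : sh d x (c • z) = c • sh d x z := by
  unfold sh
  rw [Finsupp.smul_sum]
  congr 1; funext u cu
  rw [Finsupp.sum_smul_index (by intro i; simp), Finsupp.smul_sum]
  congr 1; funext v cv
  rw [smul_smul]
  ring_nf

lemma sh_comm (d : ℕ) (x y : KA d) : sh d x y = sh d y x := by
  unfold sh
  rw [Finsupp.sum_comm]
  congr 1; funext v cv
  congr 1; funext u cu
  rw [mul_comm, shuffleWord_comm]

lemma sh_sub_left (d : ℕ) (x y z : KA d) : sh d (x - y) z = sh d x z - sh d y z := by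
  have := sh_add_left d y (x - y) z
  rw [add_sub_cancel] at this
  rw [this]; abel

lemma sh_sub_right (d : ℕ) (x y z : KA d) : sh d x (y - z) = sh d x y - sh d x z := by
  have := sh_add_right d x z (y - z)
  rw [add_sub_cancel] at this
  rw [this]; abel

lemma EbarL_single (d : ℕ) (t : ℝ) (w : Word d) (c : ℝ) :
    EbarL d t (Finsupp.single w c) = c * Ebar d t w := by
  unfold EbarL
  rw [Finsupp.sum_single_index]; simp

lemma EbarL_add (d : ℕ) (t : ℝ) (x y : KA d) :
    EbarL d t (x + y) = EbarL d t x + EbarL d t y := by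
  unfold EbarL
  rw [Finsupp.sum_add_index] <;> intros <;> simp [add_mul]

lemma EbarL_sub (d : ℕ) (t : ℝ) (x y : KA d) :
    EbarL d t (x - y) = EbarL d t x - EbarL d t y := by
  have := EbarL_add d t y (x - y)
  rw [add_sub_cancel] at this
  rw [this]; ring

lemma EbarL_smul (d : ℕ) (t : ℝ) (c : ℝ) (x : KA d) :
    EbarL d t (c • x) = c * EbarL d t x := by
  unfold EbarL
  rw [Finsupp.sum_smul_index (by intro i; simp), Finsupp.mul_sum]
  congr 1; funext w cw; ring

lemma EbarL_mapDomain_reverse (d : ℕ) (t : ℝ) (x : KA d) :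
    EbarL d t (Finsupp.mapDomain List.reverse x) = EbarL d t x := by
  unfold EbarL
  rw [Finsupp.sum_mapDomain_index (by intro w; simp) (by intro w c c'; ring)]
  simp only [Ebar_reverse]
lemma wordLift_single (d : ℕ) (f : Word d → KA d) (w : Word d) (c : ℝ) :
    wordLift d f (Finsupp.single w c) = c • f w := by
  simp [wordLift, Finsupp.lsum_single, LinearMap.toSpanSingleton_apply]

lemma Sa_single (d : ℕ) (w : Word d) :
    Sa d (Finsupp.single w 1) = ((-1 : ℝ) ^ w.length) • Finsupp.single w.reverse 1 := by
  rw [Sa, wordLift_single, one_smul, Finsupp.smul_single, smul_eq_mul, mul_one]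

lemma EE_single (d : ℕ) (t : ℝ) (w : Word d) :
    EE d t (Finsupp.single w 1) = Finsupp.single ([] : Word d) (Ebar d t w) := by
  rw [EE, wordLift_single, one_smul]

/-- The key scalar computation: value of the centered pairing on basis words. -/
lemma key_val (d : ℕ) (t : ℝ) (w w' : Word d) :
    EbarL d t (sh d ((idE d - EE d t) (Finsupp.single w 1))
                    ((idE d - EE d t) (Finsupp.single w' 1)))
      = EbarL d t (shuffleWord d w w') - Ebar d t w * Ebar d t w' := by
  rw [LinearMap.sub_apply, LinearMap.sub_apply, idE, LinearMap.id_apply, LinearMap.id_apply,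
    EE_single, EE_single, sh_sub_left, sh_sub_right, sh_sub_right, EbarL_sub, EbarL_sub,
    EbarL_sub]
  have h1 : Finsupp.single ([] : Word d) (Ebar d t w') =
      (Ebar d t w') • Finsupp.single ([] : Word d) (1 : ℝ) := by
    rw [Finsupp.smul_single, smul_eq_mul, mul_one]
  have h2 : Finsupp.single ([] : Word d) (Ebar d t w) =
      (Ebar d t w) • Finsupp.single ([] : Word d) (1 : ℝ) := by
    rw [Finsupp.smul_single, smul_eq_mul, mul_one]
  rw [h1, h2, sh_smul_left, sh_smul_right, sh_smul_right, sh_smul_left,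
    sh_single_single, sh_single_single, sh_single_single, sh_single_single]
  simp only [one_mul, one_smul, shuffleWord_nil_left, shuffleWord_nil_right, EbarL_smul,
    EbarL_single, Ebar_nil]
  ring

lemma key_rev (d : ℕ) (t : ℝ) (w w' : Word d) :
    EbarL d t (sh d ((idE d - EE d t) (Finsupp.single w.reverse 1))
                    ((idE d - EE d t) (Finsupp.single w'.reverse 1)))
      = EbarL d t (sh d ((idE d - EE d t) (Finsupp.single w 1))
                        ((idE d - EE d t) (Finsupp.single w' 1))) := by
  rw [key_val, key_val, shuffleWord_reverse, EbarL_mapDomain_reverse, Ebar_reverse,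
    Ebar_reverse]
section IPlemmas
variable (d : ℕ) (t : ℝ) {H : Type*} [NormedAddCommGroup H] [InnerProductSpace ℝ H]
  (Vf : Word d → H) (n : ℕ)

lemma ip_smul_left (c : ℝ) (X Y : KA d →ₗ[ℝ] KA d) :
    ip d t Vf n (c • X) Y = c * ip d t Vf n X Y := by
  simp only [ip, LinearMap.smul_apply, sh_smul_left, EbarL_smul, Finset.mul_sum, mul_assoc]

lemma ip_smul_right (c : ℝ) (X Y : KA d →ₗ[ℝ] KA d) :
    ip d t Vf n X (c • Y) = c * ip d t Vf n X Y := by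
  simp only [ip, LinearMap.smul_apply, sh_smul_right, EbarL_smul, Finset.mul_sum, mul_assoc]

lemma ip_sub_left (X X' Y : KA d →ₗ[ℝ] KA d) :
    ip d t Vf n (X - X') Y = ip d t Vf n X Y - ip d t Vf n X' Y := by
  simp only [ip, LinearMap.sub_apply, sh_sub_left, EbarL_sub, sub_mul,
    Finset.sum_sub_distrib]

lemma ip_sub_right (X Y Y' : KA d →ₗ[ℝ] KA d) :
    ip d t Vf n X (Y - Y') = ip d t Vf n X Y - ip d t Vf n X Y' := by
  simp only [ip, LinearMap.sub_apply, sh_sub_right, EbarL_sub, sub_mul,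
    Finset.sum_sub_distrib]

lemma ip_symm (X Y : KA d →ₗ[ℝ] KA d) : ip d t Vf n X Y = ip d t Vf n Y X := by
  unfold ip
  rw [Finset.sum_comm]
  refine Finset.sum_congr rfl fun v _ => Finset.sum_congr rfl fun u _ => ?_
  rw [sh_comm, real_inner_comm]

lemma ip_SS :
    ip d t Vf n ((idE d - EE d t) ∘ₗ Sa d) ((idE d - EE d t) ∘ₗ Sa d)
      = ip d t Vf n (idE d - EE d t) (idE d - EE d t) := by
  unfold ip
  refine Finset.sum_congr rfl fun u _ => Finset.sum_congr rfl fun v _ => ?_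
  rw [LinearMap.comp_apply, LinearMap.comp_apply, Sa_single, Sa_single, map_smul, map_smul,
    sh_smul_left, sh_smul_right, EbarL_smul, EbarL_smul, ← mul_assoc (((-1:ℝ)) ^ _),
    List.length_ofFn, List.length_ofFn, key_rev]
  have h : ((-1:ℝ)) ^ n * (-1) ^ n = 1 := by
    rw [← pow_add]
    exact Even.neg_one_pow ⟨n, rfl⟩
  rw [h, one_mul]

end IPlemmas
theorem stmt_1 (d n : ℕ) (hd : 1 ≤ d) (hn : 1 ≤ n) (t : ℝ) (ht : 0 < t)
    {H : Type*} [NormedAddCommGroup H] [InnerProductSpace ℝ H]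
    (Vf : Word d → H) (ε : ℝ) (hε : ε ≠ -1) :
    ip d t Vf n ((idE d - EE d t) ∘ₗ idE d) ((idE d - EE d t) ∘ₗ idE d)
      = ip d t Vf n ((idE d - EE d t) ∘ₗ Reps d ε) ((idE d - EE d t) ∘ₗ Reps d ε)
        + (2 * ε / (1 + ε) ^ 2) *
          (ip d t Vf n ((idE d - EE d t) ∘ₗ idE d) ((idE d - EE d t) ∘ₗ idE d)
            + ip d t Vf n ((idE d - EE d t) ∘ₗ idE d) ((idE d - EE d t) ∘ₗ Sa d)) := by
  have h1 : (1 : ℝ) + ε ≠ 0 := fun h => hε (by linarith)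
  set F := idE d - EE d t with hF
  have hid : F ∘ₗ idE d = F := LinearMap.comp_id F
  have hR : F ∘ₗ Reps d ε = (1 / (1 + ε)) • (F - ε • (F ∘ₗ Sa d)) := by
    apply LinearMap.ext; intro x
    simp [Reps, idE, LinearMap.comp_apply, map_smul, map_sub, smul_sub]
  have expand : ip d t Vf n (F ∘ₗ Reps d ε) (F ∘ₗ Reps d ε)
      = (1/(1+ε))^2 * ((1+ε^2) * ip d t Vf n F F
          - 2*ε* ip d t Vf n F (F ∘ₗ Sa d)) := by
    rw [hR]
    simp only [ip_smul_left, ip_smul_right, ip_sub_left, ip_sub_right]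
    rw [show ip d t Vf n (F ∘ₗ Sa d) F = ip d t Vf n F (F ∘ₗ Sa d) from
        ip_symm d t Vf n _ _,
      show ip d t Vf n (F ∘ₗ Sa d) (F ∘ₗ Sa d) = ip d t Vf n F F from ip_SS d t Vf n]
    ring
  rw [hid, expand]
  field_simp
  ring
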